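/- Let G be a simple graph on a finite vertex set V with |V| = n ≥ 2 that has no isolated vertices (every vertex has degree at least 1), and let σ be an orientation of G. Let p = |det R_s(G^σ)|. Then √(2n/(n−1) + n·(n−2)·p^{2/n}) ≤ RE_s(G^σ) ≤ 2·⌊n/2⌋. -/

import Mathlib

set_option maxRecDepth 4000
set_option maxHeartbeats 1000000

open Matrix Polynomial

lemma multiset_sq_sum_le {T : Multiset ℝ} (h : ∀ a ∈ T, 0 ≤ a) :
    (T.map (fun a => a ^ 2)).sum ≤ T.sum ^ 2 := by
  induction T using Multiset.induction with
  | empty => simp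
  | cons a s ih =>
    simp only [Multiset.map_cons, Multiset.sum_cons]
    have ha : 0 ≤ a := h a (Multiset.mem_cons_self a s)
    have hs : ∀ b ∈ s, 0 ≤ b := fun b hb => h b (Multiset.mem_cons_of_mem hb)
    have hssum : 0 ≤ s.sum := Multiset.sum_nonneg (by simpa using hs)
    have := ih hs
    nlinarith

lemma multiset_neg_pairing (Λ : Multiset ℝ) (h : Λ.map (fun x => -x) = Λ) :
    ∃ (T : Multiset ℝ) (k : ℕ),
      Λ = T + T.map (fun x => -x) + Multiset.replicate k 0 ∧ ∀ a ∈ T, 0 < a := by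
  induction Λ using Multiset.strongInductionOn with
  | ih Λ IH =>
  rcases Multiset.empty_or_exists_mem Λ with rfl | ⟨a, ha⟩
  · exact ⟨0, 0, by simp, by simp⟩
  by_cases h0 : (0:ℝ) ∈ Λ
  · set Λ' := Λ.erase 0 with hΛ'
    have hcons : Λ = 0 ::ₘ Λ' := (Multiset.cons_erase h0).symm
    have hΛ'c : Λ'.map (fun x => -x) = Λ' := by
      have : (0:ℝ) ::ₘ Λ'.map (fun x => -x) = 0 ::ₘ Λ' := by
        rw [← hcons]
        calc (0:ℝ) ::ₘ Λ'.map (fun x => -x) = ((0:ℝ) ::ₘ Λ').map (fun x => -x) := by simp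
        _ = Λ.map (fun x => -x) := by rw [← hcons]
        _ = Λ := h
      exact (Multiset.cons_inj_right _).mp this
    obtain ⟨T, k, hTk, hpos⟩ := IH Λ' (by rw [hcons]; exact Multiset.lt_cons_self _ _) hΛ'c
    exact ⟨T, k + 1, by rw [hcons, hTk, Multiset.replicate_succ]; ext x; simp [Multiset.count_cons], hpos⟩
  · -- all elements nonzero
    have hane : a ≠ 0 := fun hh => h0 (hh ▸ ha)
    -- wlog get positive element
    have key : ∀ b : ℝ, b ∈ Λ → (-b) ∈ Λ := by
      intro b hb
      rw [← h]
      exact Multiset.mem_map_of_mem _ hb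
    obtain ⟨c, hc, hcpos⟩ : ∃ c, c ∈ Λ ∧ 0 < c := by
      rcases lt_trichotomy a 0 with hlt | heq | hgt
      · exact ⟨-a, key a ha, by linarith⟩
      · exact absurd heq hane
      · exact ⟨a, ha, hgt⟩
    have hnc : (-c) ∈ Λ.erase c := by
      apply (Multiset.mem_erase_of_ne (by intro hh; nlinarith [hh])).mpr (key c hc)
    set Λ'' := (Λ.erase c).erase (-c) with hΛ''
    have hcons : Λ = c ::ₘ (-c) ::ₘ Λ'' := by
      rw [hΛ'', Multiset.cons_erase hnc, Multiset.cons_erase hc]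
    have hΛ''c : Λ''.map (fun x => -x) = Λ'' := by
      have h2 : c ::ₘ (-c) ::ₘ Λ''.map (fun x => -x) = c ::ₘ (-c) ::ₘ Λ'' := by
        calc c ::ₘ (-c) ::ₘ Λ''.map (fun x => -x)
            = (-(-c)) ::ₘ (-c) ::ₘ Λ''.map (fun x => -x) := by rw [neg_neg]
          _ = ((-c) ::ₘ c ::ₘ Λ'').map (fun x => -x) := by
              simp only [Multiset.map_cons, neg_neg]
          _ = (c ::ₘ (-c) ::ₘ Λ'').map (fun x => -x) := by rw [Multiset.cons_swap]
          _ = Λ.map (fun x => -x) := by rw [← hcons]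
          _ = Λ := h
          _ = c ::ₘ (-c) ::ₘ Λ'' := hcons
      exact (Multiset.cons_inj_right _).mp ((Multiset.cons_inj_right _).mp h2)
    have hlt : Λ'' < Λ := by
      rw [hcons]
      calc Λ'' < (-c) ::ₘ Λ'' := Multiset.lt_cons_self _ _
        _ < c ::ₘ (-c) ::ₘ Λ'' := Multiset.lt_cons_self _ _
    obtain ⟨T, k, hTk, hpos⟩ := IH Λ'' hlt hΛ''c
    refine ⟨c ::ₘ T, k, ?_, ?_⟩
    · rw [hcons, hTk]
      ext x
      simp [Multiset.count_cons]
      ring_nf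
    · intro b hb
      rcases Multiset.mem_cons.mp hb with rfl | hb'
      · exact hcpos
      · exact hpos b hb'

set_option maxRecDepth 4000

lemma list_sum_map_fin (f : ℝ → ℝ) (l : List ℝ) :
    (l.map f).sum = ∑ i : Fin l.length, f l[i] := by
  induction l with
  | nil => simp
  | cons a l ih =>
    rw [List.map_cons, List.sum_cons, ih]
    rw [show ∑ i : Fin (a :: l).length, f (a :: l)[i]
        = f ((a :: l)[(0 : Fin (l.length + 1))]) + ∑ i : Fin l.length, f (a :: l)[i.succ]
      from Fin.sum_univ_succ _]
    simp

lemma list_prod_map_fin (f : ℝ → ℝ) (l : List ℝ) :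
    (l.map f).prod = ∏ i : Fin l.length, f l[i] := by
  induction l with
  | nil => simp
  | cons a l ih =>
    rw [List.map_cons, List.prod_cons, ih]
    rw [show ∏ i : Fin (a :: l).length, f (a :: l)[i]
        = f ((a :: l)[(0 : Fin (l.length + 1))]) * ∏ i : Fin l.length, f (a :: l)[i.succ]
      from Fin.prod_univ_succ _]
    simp

lemma fin_amgm {m : ℕ} (hm : 2 ≤ m) (a : Fin m → ℝ) (hpos : ∀ i, 0 < a i) :
    (m : ℝ) * ((m : ℝ) - 1) * (∏ i, a i) ^ ((2 : ℝ) / (m : ℝ))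
      ≤ (∑ i, a i) ^ 2 - ∑ i, (a i) ^ 2 := by
  have hm1 : (1:ℝ) ≤ (m:ℝ) - 1 := by
    have : (2:ℝ) ≤ (m:ℝ) := by exact_mod_cast hm
    linarith
  have hmR : (0:ℝ) < (m:ℝ) := by positivity
  set s := (Finset.univ : Finset (Fin m)).offDiag with hs
  have hN : (s.card : ℝ) = (m : ℝ) * ((m : ℝ) - 1) := by
    rw [hs, Finset.offDiag_card, Finset.card_univ, Fintype.card_fin,
      Nat.cast_sub (Nat.le_mul_of_pos_left _ (by omega : 0 < m))]
    push_cast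
    ring
  have hNpos : (0:ℝ) < (m : ℝ) * ((m : ℝ) - 1) := by nlinarith
  have hunion : (Finset.univ : Finset (Fin m)).diag ∪ s = Finset.univ ×ˢ Finset.univ :=
    Finset.diag_union_offDiag _
  have hdisj : Disjoint (Finset.univ : Finset (Fin m)).diag s :=
    Finset.disjoint_diag_offDiag _
  -- sum over offDiag
  have hsplit : ∑ p ∈ s, a p.1 * a p.2 = (∑ i, a i) ^ 2 - ∑ i, (a i) ^ 2 := by
    have h1 : ∑ p ∈ (Finset.univ : Finset (Fin m)).diag ∪ s, a p.1 * a p.2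
        = (∑ i, a i) ^ 2 := by
      rw [hunion, Finset.sum_product, ← Finset.sum_mul_sum, sq]
    rw [Finset.sum_union hdisj, Finset.sum_diag] at h1
    have h2 : ∑ i : Fin m, a i * a i = ∑ i, (a i)^2 := by
      apply Finset.sum_congr rfl; intros; rw [sq]
    linarith
  -- product over offDiag
  have hprodpos : (0:ℝ) < ∏ i, a i := Finset.prod_pos (fun i _ => hpos i)
  set P := ∏ i, a i with hP
  have hprod : ∏ p ∈ s, (a p.1 * a p.2) = P ^ (2 * m - 2) := by
    have h1 : ∏ p ∈ (Finset.univ : Finset (Fin m)).diag ∪ s, (a p.1 * a p.2)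
        = P ^ (2 * m) := by
      rw [hunion, Finset.prod_product]
      simp only [Finset.prod_mul_distrib, Finset.prod_const, Finset.card_univ,
        Fintype.card_fin, Finset.prod_pow]
      rw [← pow_add]
      congr 1
      ring
    rw [Finset.prod_union hdisj, Finset.prod_diag] at h1
    have h2 : ∏ i : Fin m, (a i * a i) = P ^ 2 := by
      rw [Finset.prod_mul_distrib, ← hP, ← pow_two]
    rw [h2] at h1
    have hP2 : P ^ 2 ≠ 0 := by positivity
    field_simp [pow_sub₀ P (ne_of_gt hprodpos) (show 2 ≤ 2*m by omega)]
    rw [pow_sub₀ P (ne_of_gt hprodpos) (show 2 ≤ 2*m by omega), ← h1, mul_comm (P ^ 2),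
      mul_inv_cancel_right₀ hP2]
  -- AM-GM
  have key := Real.geom_mean_le_arith_mean_weighted s (fun _ => 1 / (s.card : ℝ))
    (fun p => a p.1 * a p.2) (fun i _ => by positivity)
    (by
      have hcard0 : (s.card : ℝ) ≠ 0 := by rw [hN]; exact ne_of_gt hNpos
      rw [Finset.sum_const, nsmul_eq_mul, mul_one_div, div_self hcard0]) 
    (fun p _ => le_of_lt (mul_pos (hpos p.1) (hpos p.2)))
  have hgeom : ∏ p ∈ s, (a p.1 * a p.2) ^ ((1:ℝ) / (s.card : ℝ))
      = P ^ ((2:ℝ) / (m:ℝ)) := by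
    rw [Real.finset_prod_rpow s _ (fun p _ => le_of_lt (mul_pos (hpos p.1) (hpos p.2))), hprod]
    rw [← Real.rpow_natCast P (2*m-2), ← Real.rpow_mul (le_of_lt hprodpos)]
    congr 1
    rw [hN, Nat.cast_sub (by omega)]
    push_cast
    field_simp
  have harith : ∑ p ∈ s, (1 / (s.card : ℝ)) * (a p.1 * a p.2)
      = ((∑ i, a i) ^ 2 - ∑ i, (a i) ^ 2) / ((m:ℝ) * ((m:ℝ) - 1)) := by
    rw [← Finset.mul_sum, hsplit, hN]
    ring
  rw [hgeom, harith] at key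
  calc (m : ℝ) * ((m : ℝ) - 1) * P ^ ((2 : ℝ) / (m : ℝ))
      ≤ (m : ℝ) * ((m : ℝ) - 1) * (((∑ i, a i) ^ 2 - ∑ i, (a i) ^ 2) / ((m:ℝ) * ((m:ℝ) - 1))) := by
        exact mul_le_mul_of_nonneg_left key (le_of_lt hNpos)
    _ = (∑ i, a i) ^ 2 - ∑ i, (a i) ^ 2 := by field_simp

lemma multiset_amgm (T : Multiset ℝ) (hpos : ∀ a ∈ T, 0 < a) :
    (Multiset.card T : ℝ) * ((Multiset.card T : ℝ) - 1) * T.prod ^ ((2:ℝ) / (Multiset.card T : ℝ))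
      ≤ T.sum ^ 2 - (T.map (fun a => a ^ 2)).sum := by
  by_cases hm : 2 ≤ Multiset.card T
  · obtain ⟨l, rfl⟩ : ∃ l : List ℝ, (↑l : Multiset ℝ) = T := ⟨T.toList, T.coe_toList⟩
    have hlen : Multiset.card (↑l : Multiset ℝ) = l.length := Multiset.coe_card l
    rw [hlen] at hm ⊢
    have hposf : ∀ i : Fin l.length, 0 < l[(i : ℕ)] := fun i => hpos _ (by
      exact Multiset.mem_coe.mpr (l.getElem_mem i.isLt))
    have h := fin_amgm hm (fun i : Fin l.length => l[(i : ℕ)]) hposf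
    beta_reduce at h
    rw [Fin.prod_univ_getElem, Fin.sum_univ_getElem] at h
    rw [show ((↑l : Multiset ℝ)).sum = l.sum from rfl,
      show ((↑l : Multiset ℝ)).prod = l.prod from rfl,
      show (Multiset.map (fun a : ℝ => a ^ 2) (↑l : Multiset ℝ)).sum
        = (l.map fun a : ℝ => a ^ 2).sum from rfl,
      list_sum_map_fin]
    exact h
  · have hcase : Multiset.card T = 0 ∨ Multiset.card T = 1 := by omega
    have h1 : (0:ℝ) ≤ T.sum ^ 2 - (T.map (fun a => a ^ 2)).sum := by
      have := multiset_sq_sum_le (T := T) (fun a ha => le_of_lt (hpos a ha))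
      linarith
    rcases hcase with hc | hc <;> rw [hc] <;> push_cast <;> simpa using h1



lemma charpoly_conj_units {V : Type*} [Fintype V] [DecidableEq V] {R : Type*} [CommRing R]
    (U W D : Matrix V V R) (h : U * W = 1) :
    (U * D * W).charpoly = D.charpoly := by
  have h1 : U.map (C : R →+* R[X]) * W.map (C : R →+* R[X]) = 1 := by
    rw [← Matrix.map_mul, h, Matrix.map_one _ (map_zero _) (map_one _)]
  have key : charmatrix (U * D * W)
      = U.map (C : R →+* R[X]) * charmatrix D * W.map (C : R →+* R[X]) := by
    unfold charmatrix
    simp only [RingHom.mapMatrix_apply]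
    rw [Matrix.map_mul, Matrix.map_mul]
    rw [mul_sub, sub_mul]
    congr 1
    have hs : (Matrix.scalar V (X : R[X])) = (X : R[X]) • (1 : Matrix V V R[X]) := by
      ext i j
      simp [Matrix.scalar_apply, Matrix.smul_apply, Matrix.one_apply, Matrix.diagonal_apply]
    rw [hs, Matrix.mul_smul, mul_one, Matrix.smul_mul, h1]
  unfold Matrix.charpoly
  rw [key, det_mul, det_mul, mul_right_comm, ← det_mul, h1, det_one, one_mul]

lemma charpoly_diagonal_roots {V : Type*} [Fintype V] [DecidableEq V] (d : V → ℂ) :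
    (Matrix.diagonal d).charpoly.roots = Finset.univ.val.map d := by
  have h1 : charmatrix (Matrix.diagonal d) = Matrix.diagonal (fun v => X - C (d v)) := by
    ext i j
    by_cases h : i = j
    · subst h; simp
    · simp [h, Matrix.diagonal_apply_ne _ h]
  have h2 : (Matrix.diagonal d).charpoly = ∏ v, (X - C (d v)) := by
    unfold Matrix.charpoly
    rw [h1, det_diagonal]
  rw [h2, Finset.prod_eq_multiset_prod]
  have h3 : Multiset.map (fun v => X - C (d v)) Finset.univ.val
      = Multiset.map (fun a : ℂ => X - C a) (Multiset.map d Finset.univ.val) := by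
    rw [Multiset.map_map]; rfl
  rw [h3, roots_multiset_prod_X_sub_C]


/-- `σ` is an orientation of the simple graph `G`. -/
def IsOrientation {V : Type*} [Fintype V] (G : SimpleGraph V) [DecidableRel G.Adj]
    (σ : V → V → ℝ) : Prop :=
  (∀ v w, σ v w + σ w v = 0) ∧
  (∀ v w, G.Adj v w → σ v w = 1 ∨ σ v w = -1) ∧
  (∀ v w, ¬ G.Adj v w → σ v w = 0)

/-- The skew Randić matrix of the oriented graph `G^σ`. -/
noncomputable def skewRandicMatrix {V : Type*} [Fintype V] (G : SimpleGraph V)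
    [DecidableRel G.Adj] (σ : V → V → ℝ) : Matrix V V ℝ :=
  fun v w => σ v w / Real.sqrt ((G.degree v : ℝ) * (G.degree w : ℝ))

/-- The Randić matrix of `G`. -/
noncomputable def randicMatrix {V : Type*} [Fintype V] (G : SimpleGraph V)
    [DecidableRel G.Adj] : Matrix V V ℝ :=
  fun v w => if G.Adj v w then 1 / Real.sqrt ((G.degree v : ℝ) * (G.degree w : ℝ)) else 0

/-- The spectrum of a real matrix: the multiset of roots, with multiplicity, of its
characteristic polynomial regarded as a matrix over `ℂ`. -/
noncomputable def spec {V : Type*} [Fintype V] [DecidableEq V] (M : Matrix V V ℝ) :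
    Multiset ℂ :=
  (M.map (fun x : ℝ => (x : ℂ))).charpoly.roots

/-- The energy of a real matrix: the sum of the absolute values of its spectrum. -/
noncomputable def energy {V : Type*} [Fintype V] [DecidableEq V] (M : Matrix V V ℝ) : ℝ :=
  ((spec M).map (fun z => ‖z‖)).sum

/-- The general Randić index `R_{-1}(G)`: the sum over all edges `{v,w}` of
`1/(d(v)·d(w))`. -/
noncomputable def randicIndexNegOne {V : Type*} [Fintype V] [DecidableEq V]
    (G : SimpleGraph V) [DecidableRel G.Adj] : ℝ :=
  ∑ e ∈ G.edgeFinset,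
    Sym2.lift ⟨fun v w => 1 / ((G.degree v : ℝ) * (G.degree w : ℝ)),
      fun v w => by simp [mul_comm]⟩ e

section Main
variable {V : Type*} [Fintype V] [DecidableEq V] (G : SimpleGraph V) [DecidableRel G.Adj]
  (σ : V → V → ℝ)

lemma F_bound (hσ : (∀ v w, σ v w + σ w v = 0) ∧
      (∀ v w, G.Adj v w → σ v w = 1 ∨ σ v w = -1) ∧
      (∀ v w, ¬ G.Adj v w → σ v w = 0))
    (hn : 2 ≤ Fintype.card V) (hdeg : ∀ v : V, 1 ≤ G.degree v) :
    (Fintype.card V : ℝ) / ((Fintype.card V : ℝ) - 1)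
      ≤ ∑ v, ∑ w, (skewRandicMatrix G σ v w) ^ 2 := by
  have hn1 : (1:ℝ) ≤ (Fintype.card V : ℝ) - 1 := by
    have : (2:ℝ) ≤ (Fintype.card V : ℝ) := by exact_mod_cast hn
    linarith
  have hsq : ∀ v w, (skewRandicMatrix G σ v w) ^ 2
      = if G.Adj v w then 1 / ((G.degree v : ℝ) * (G.degree w : ℝ)) else 0 := by
    intro v w
    by_cases h : G.Adj v w
    · have hd : (0:ℝ) < (G.degree v : ℝ) * (G.degree w : ℝ) := by
        have h1 : (1:ℝ) ≤ (G.degree v : ℝ) := by exact_mod_cast hdeg v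
        have h2 : (1:ℝ) ≤ (G.degree w : ℝ) := by exact_mod_cast hdeg w
        nlinarith
      have hsq1 : (σ v w) ^ 2 = 1 := by
        rcases hσ.2.1 v w h with h1 | h1 <;> rw [h1] <;> norm_num
      simp only [h, if_true, skewRandicMatrix]
      rw [div_pow, hsq1, Real.sq_sqrt (le_of_lt hd)]
    · simp [h, skewRandicMatrix, hσ.2.2 v w h]
  have hinner : ∀ v : V, 1 / ((Fintype.card V : ℝ) - 1) ≤ ∑ w, (skewRandicMatrix G σ v w) ^ 2 := by
    intro v
    have hdv : (0:ℝ) < (G.degree v : ℝ) := by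
      have := hdeg v; positivity
    have h1 : ∑ w, (skewRandicMatrix G σ v w) ^ 2
        = ∑ w ∈ G.neighborFinset v, 1 / ((G.degree v : ℝ) * (G.degree w : ℝ)) := by
      rw [SimpleGraph.neighborFinset_eq_filter, Finset.sum_filter]
      apply Finset.sum_congr rfl
      intro w _
      rw [hsq]
    rw [h1]
    have h2 : ∀ w ∈ G.neighborFinset v,
        1 / ((G.degree v : ℝ) * ((Fintype.card V : ℝ) - 1)) ≤
        1 / ((G.degree v : ℝ) * (G.degree w : ℝ)) := by
      intro w _
      apply one_div_le_one_div_of_le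
      · have : (1:ℝ) ≤ (G.degree w : ℝ) := by exact_mod_cast hdeg w
        nlinarith
      · apply mul_le_mul_of_nonneg_left _ (le_of_lt hdv)
        have h3 : G.degree w + 1 ≤ Fintype.card V := G.degree_lt_card_verts w
        have h4 : ((G.degree w : ℝ) + 1) ≤ (Fintype.card V : ℝ) := by exact_mod_cast h3
        linarith
    calc (1:ℝ) / ((Fintype.card V : ℝ) - 1)
        = (G.degree v : ℝ) * (1 / ((G.degree v : ℝ) * ((Fintype.card V : ℝ) - 1))) := by
          field_simp
      _ = ∑ _w ∈ G.neighborFinset v, 1 / ((G.degree v : ℝ) * ((Fintype.card V : ℝ) - 1)) := by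
          rw [Finset.sum_const, SimpleGraph.card_neighborFinset_eq_degree, nsmul_eq_mul]
      _ ≤ ∑ w ∈ G.neighborFinset v, 1 / ((G.degree v : ℝ) * (G.degree w : ℝ)) :=
          Finset.sum_le_sum h2
  calc (Fintype.card V : ℝ) / ((Fintype.card V : ℝ) - 1)
      = ∑ _v : V, 1 / ((Fintype.card V : ℝ) - 1) := by
        rw [Finset.sum_const, Finset.card_univ, nsmul_eq_mul]; ring
    _ ≤ ∑ v, ∑ w, (skewRandicMatrix G σ v w) ^ 2 := Finset.sum_le_sum (fun v _ => hinner v)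



variable {V : Type*} [Fintype V] [DecidableEq V] (G : SimpleGraph V) [DecidableRel G.Adj]
  (σ : V → V → ℝ)

end Main

theorem skewRandic_energy_bounds_no_isolated
    {V : Type*} [Fintype V] [DecidableEq V] (G : SimpleGraph V) [DecidableRel G.Adj]
    (σ : V → V → ℝ) (hσ : IsOrientation G σ) (hn : 2 ≤ Fintype.card V)
    (hdeg : ∀ v : V, 1 ≤ G.degree v) :
    Real.sqrt ((2 * (Fintype.card V : ℝ)) / ((Fintype.card V : ℝ) - 1) +
        (Fintype.card V : ℝ) * ((Fintype.card V : ℝ) - 2) *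
          |(skewRandicMatrix G σ).det| ^ ((2 : ℝ) / (Fintype.card V : ℝ)))
      ≤ energy (skewRandicMatrix G σ) ∧
    energy (skewRandicMatrix G σ) ≤ 2 * (Fintype.card V / 2 : ℕ) := by
  replace hσ : (∀ v w, σ v w + σ w v = 0) ∧
      (∀ v w, G.Adj v w → σ v w = 1 ∨ σ v w = -1) ∧
      (∀ v w, ¬ G.Adj v w → σ v w = 0) := hσ
  set M := skewRandicMatrix G σ with hM
  set Mc := M.map (fun x : ℝ => (x : ℂ)) with hMc
  have hskew : ∀ v w, M w v = - M v w := by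
    intro v w
    have h1 : σ w v = - σ v w := by linarith [hσ.1 v w]
    rw [hM]
    show σ w v / Real.sqrt ((G.degree w : ℝ) * (G.degree v : ℝ))
      = -(σ v w / Real.sqrt ((G.degree v : ℝ) * (G.degree w : ℝ)))
    rw [h1, mul_comm, neg_div]
  set H := Complex.I • Mc with hH
  have hHerm : H.IsHermitian := by
    ext v w
    show star (H w v) = H v w
    rw [hH]
    show star (Complex.I * ((M w v : ℝ) : ℂ)) = Complex.I * ((M v w : ℝ) : ℂ)
    rw [star_mul', Complex.star_def, Complex.conj_I, Complex.conj_ofReal, hskew v w]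
    push_cast
    ring
  set U : Matrix V V ℂ := (hHerm.eigenvectorUnitary : Matrix V V ℂ) with hU
  set ev := hHerm.eigenvalues with hev
  have hU1 : U * star U = 1 := (Matrix.mem_unitaryGroup_iff).mp hHerm.eigenvectorUnitary.2
  have hU2 : star U * U = 1 := (Matrix.mem_unitaryGroup_iff').mp hHerm.eigenvectorUnitary.2
  have hMcdecomp : Mc = U * Matrix.diagonal (fun v => -Complex.I * (ev v : ℂ)) * star U := by
    have h0 : H = U * Matrix.diagonal (RCLike.ofReal ∘ ev) * star U := hHerm.spectral_theorem
    have h1 : Mc = (-Complex.I) • H := by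
      rw [hH, smul_smul]
      simp [Complex.I_mul_I]
    rw [h1, h0, ← Matrix.smul_mul, ← Matrix.mul_smul]
    rw [show (-Complex.I) • Matrix.diagonal (RCLike.ofReal ∘ ev)
        = Matrix.diagonal ((-Complex.I) • (RCLike.ofReal ∘ ev)) from
      (Matrix.diagonal_smul _ _).symm]
    have hfe : (-Complex.I • RCLike.ofReal ∘ ev : V → ℂ) = fun v => -Complex.I * (ev v : ℂ) := by
      funext v
      simp only [Pi.smul_apply, Function.comp_apply, smul_eq_mul]
      rfl
    rw [hfe]
  -- charpoly facts
  have hcp : Mc.charpoly.roots = Finset.univ.val.map (fun v => -Complex.I * (ev v : ℂ)) := by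
    rw [hMcdecomp, charpoly_conj_units U (star U) _ hU1, charpoly_diagonal_roots]
  -- trace fact
  have hsumsq : ∑ v, (ev v) ^ 2 = ∑ v, ∑ w, (M v w) ^ 2 := by
    have htr1 : Matrix.trace (H * H) = ((∑ v, ∑ w, (M v w) ^ 2 : ℝ) : ℂ) := by
      rw [Matrix.trace]
      push_cast
      apply Finset.sum_congr rfl
      intro v _
      rw [Matrix.diag_apply, Matrix.mul_apply]
      apply Finset.sum_congr rfl
      intro w _
      show (Complex.I * ((M v w : ℝ) : ℂ)) * (Complex.I * ((M w v : ℝ) : ℂ)) = _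
      rw [hskew v w]
      push_cast
      rw [show Complex.I * (M v w : ℂ) * (Complex.I * -(M v w : ℂ))
          = -(Complex.I * Complex.I) * ((M v w : ℂ) * (M v w : ℂ)) by ring,
        Complex.I_mul_I]
      ring
    have htr2 : Matrix.trace (H * H) = ((∑ v, (ev v) ^ 2 : ℝ) : ℂ) := by
      have h0 : H = U * Matrix.diagonal (RCLike.ofReal ∘ ev) * star U := hHerm.spectral_theorem
      have hHH : H * H = U * (Matrix.diagonal (RCLike.ofReal ∘ ev)
          * Matrix.diagonal (RCLike.ofReal ∘ ev)) * star U := by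
        rw [h0]
        simp only [mul_assoc]
        rw [show star U * (U * (Matrix.diagonal (RCLike.ofReal ∘ ev) * star U))
            = Matrix.diagonal (RCLike.ofReal ∘ ev) * star U by
          rw [← mul_assoc, hU2, one_mul]]
      rw [hHH, Matrix.trace_mul_comm, ← mul_assoc, hU2, one_mul,
        Matrix.diagonal_mul_diagonal, Matrix.trace_diagonal]
      push_cast
      apply Finset.sum_congr rfl
      intro v _
      show (RCLike.ofReal (ev v) : ℂ) * RCLike.ofReal (ev v) = _
      rw [show (RCLike.ofReal (ev v) : ℂ) = ((ev v : ℝ) : ℂ) from rfl]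
      ring
    have hq := htr2.symm.trans htr1
    exact_mod_cast hq
  -- determinant fact
  have hdet : |M.det| = ∏ v, |ev v| := by
    have h1 : (M.det : ℂ) = Mc.det := by
      rw [hMc, show (fun x : ℝ => (x : ℂ)) = ⇑Complex.ofRealHom from rfl]
      exact Complex.ofRealHom.map_det M
    have h2 : Mc.det = ∏ v, (-Complex.I * (ev v : ℂ)) := by
      rw [Matrix.det_eq_prod_roots_charpoly, hcp]
      rw [← Finset.prod_eq_multiset_prod]
    have h3 : ‖(M.det : ℂ)‖ = ∏ v, |ev v| := by
      rw [h1, h2, norm_prod]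
      apply Finset.prod_congr rfl
      intro v _
      rw [norm_mul, norm_neg, Complex.norm_I, Complex.norm_real, Real.norm_eq_abs, one_mul]
    rw [← h3, Complex.norm_real, Real.norm_eq_abs]
  -- energy
  have henergy : energy M = ∑ v, |ev v| := by
    unfold energy spec
    rw [← hMc, hcp, Multiset.map_map]
    rw [Finset.sum_eq_multiset_sum]
    apply congrArg Multiset.sum
    apply Multiset.map_congr rfl
    intro v _
    show ‖(-Complex.I * (ev v : ℂ))‖ = |ev v|
    rw [norm_mul, norm_neg, Complex.norm_I, Complex.norm_real, Real.norm_eq_abs, one_mul]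
  -- closure under negation
  have hΛneg : (Finset.univ.val.map ev).map (fun x : ℝ => -x) = Finset.univ.val.map ev := by
    have hsplit : Mc.charpoly.Splits := IsAlgClosed.splits _
    have hmapc : Polynomial.map (starRingEnd ℂ) Mc.charpoly = Mc.charpoly := by
      have h1 : Mc.charpoly = Polynomial.map Complex.ofRealHom M.charpoly := by
        rw [hMc, show (fun x : ℝ => (x : ℂ)) = ⇑Complex.ofRealHom from rfl]
        exact Matrix.charpoly_map M Complex.ofRealHom
      rw [h1, Polynomial.map_map]
      congr 1
      ext r
      exact Complex.conj_ofReal r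
    have hconj : Mc.charpoly.roots.map (starRingEnd ℂ) = Mc.charpoly.roots := by
      rw [← hsplit.roots_map (starRingEnd ℂ), hmapc]
    have hneg : Mc.charpoly.roots.map (fun z : ℂ => -z) = Mc.charpoly.roots := by
      have e1 : Mc.charpoly.roots.map (fun z : ℂ => -z)
          = Finset.univ.val.map (fun v => Complex.I * (ev v : ℂ)) := by
        rw [hcp, Multiset.map_map]
        apply Multiset.map_congr rfl
        intro v _
        show -(-Complex.I * (ev v : ℂ)) = Complex.I * (ev v : ℂ)
        ring
      have e2 : Mc.charpoly.roots.map (starRingEnd ℂ)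
          = Finset.univ.val.map (fun v => Complex.I * (ev v : ℂ)) := by
        rw [hcp, Multiset.map_map]
        apply Multiset.map_congr rfl
        intro v _
        show (starRingEnd ℂ) (-Complex.I * (ev v : ℂ)) = Complex.I * (ev v : ℂ)
        rw [_root_.map_mul, map_neg, Complex.conj_I, Complex.conj_ofReal]
        ring
      rw [e1, ← e2, hconj]
    have hinj : Function.Injective (fun r : ℝ => -Complex.I * (r : ℂ)) := by
      intro a b hab
      simp only at hab
      have hI : (-Complex.I) ≠ 0 := by simp [Complex.I_ne_zero]
      have := mul_left_cancel₀ hI hab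
      exact_mod_cast this
    apply Multiset.map_injective hinj
    show ((Finset.univ.val.map ev).map (fun x : ℝ => -x)).map (fun r : ℝ => -Complex.I * (r : ℂ))
        = (Finset.univ.val.map ev).map (fun r : ℝ => -Complex.I * (r : ℂ))
    rw [Multiset.map_map, Multiset.map_map, Multiset.map_map]
    have e3 : Finset.univ.val.map (((fun r : ℝ => -Complex.I * (r : ℂ)) ∘ (fun x : ℝ => -x)) ∘ ev)
        = Mc.charpoly.roots.map (fun z : ℂ => -z) := by
      rw [hcp, Multiset.map_map]
      apply Multiset.map_congr rfl
      intro v _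
      show -Complex.I * ((-(ev v) : ℝ) : ℂ) = -(-Complex.I * (ev v : ℂ))
      push_cast
      ring
    rw [e3, hneg, hcp]
    apply Multiset.map_congr rfl
    intro v _
    rfl
  -- eigenvalue bound
  have hone : ∀ t : V, |ev t| ≤ 1 := by
    intro t
    set z : V → ℂ := (WithLp.equiv 2 (V → ℂ)) (hHerm.eigenvectorBasis t) with hz
    have hzeig : H *ᵥ z = ((ev t : ℝ) : ℂ) • z := by
      have h1 := hHerm.mulVec_eigenvectorBasis t
      rw [hz]
      show H *ᵥ (hHerm.eigenvectorBasis t).ofLp = _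
      rw [h1]
      funext w
      simp [Complex.real_smul, hev]
    have hzne : z ≠ 0 := by
      intro hzero
      apply hHerm.eigenvectorBasis.orthonormal.ne_zero t
      have : (WithLp.equiv 2 (V → ℂ)) (hHerm.eigenvectorBasis t) = (WithLp.equiv 2 (V → ℂ)) 0 := by
        rw [← hz, hzero]
        simp
      exact (WithLp.equiv 2 (V → ℂ)).injective this
    have hMceig : Mc *ᵥ z = (-Complex.I * (ev t : ℂ)) • z := by
      have h1 : Mc = (-Complex.I) • H := by
        rw [hH, smul_smul]
        simp [Complex.I_mul_I]
      rw [h1, Matrix.smul_mulVec, hzeig, smul_smul]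
    set sf : V → ℝ := fun w => Real.sqrt (G.degree w) with hsf
    have hspos : ∀ w, 0 < sf w := by
      intro w
      apply Real.sqrt_pos.mpr
      have := hdeg w
      positivity
    have hsne : ∀ w, ((sf w : ℝ) : ℂ) ≠ 0 := fun w => by
      exact_mod_cast ne_of_gt (hspos w)
    set u : V → ℂ := fun w => z w / ((sf w : ℝ) : ℂ) with hu
    have hzu : ∀ w, z w = ((sf w : ℝ) : ℂ) * u w := by
      intro w
      rw [hu, mul_comm]
      exact (div_mul_cancel₀ _ (hsne w)).symm
    have hsq : ∀ w, ((sf w : ℝ) : ℂ) * ((sf w : ℝ) : ℂ) = ((G.degree w : ℕ) : ℂ) := by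
      intro w
      have h5 : sf w * sf w = (G.degree w : ℝ) := Real.mul_self_sqrt (by positivity)
      exact_mod_cast h5
    have hMcapply : ∀ v w, Mc v w = ((σ v w / (sf v * sf w) : ℝ) : ℂ) := by
      intro v w
      show ((M v w : ℝ) : ℂ) = _
      rw [hM]
      show ((σ v w / Real.sqrt ((G.degree v : ℝ) * (G.degree w : ℝ)) : ℝ) : ℂ) = _
      rw [Real.sqrt_mul (by positivity) _]
    have hkey : ∀ v, ∑ w, (σ v w : ℂ) * u w
        = (-Complex.I * (ev t : ℂ)) * ((G.degree v : ℕ) : ℂ) * u v := by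
      intro v
      have h2 : ∑ w, Mc v w * z w = (-Complex.I * (ev t : ℂ)) * z v := by
        have := congrFun hMceig v
        rw [Matrix.mulVec, dotProduct] at this
        rw [this]
        simp [smul_eq_mul]
      have h3 : ∀ w, Mc v w * z w = ((σ v w : ℂ) * u w) / ((sf v : ℝ) : ℂ) := by
        intro w
        rw [hMcapply v w, hzu w]
        push_cast
        rw [div_mul_eq_mul_div, div_eq_div_iff (mul_ne_zero (hsne v) (hsne w)) (hsne v)]
        ring
      rw [Finset.sum_congr rfl (fun w _ => h3 w), ← Finset.sum_div, hzu v] at h2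
      rw [div_eq_iff (hsne v)] at h2
      rw [h2]
      rw [show (-Complex.I * (ev t : ℂ)) * (((sf v : ℝ) : ℂ) * u v) * ((sf v : ℝ) : ℂ)
          = (-Complex.I * (ev t : ℂ)) * ((((sf v : ℝ) : ℂ)) * (((sf v : ℝ) : ℂ))) * u v by ring,
        hsq v]
    obtain ⟨t0, _, hmax⟩ := Finset.exists_max_image Finset.univ
      (fun w => ‖(u w)‖) ⟨t, Finset.mem_univ t⟩
    have hu0 : 0 < ‖(u t0)‖ := by
      obtain ⟨w, hw⟩ := Function.ne_iff.mp hzne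
      have huw : u w ≠ 0 := by
        intro huw0
        apply hw
        rw [hzu w, huw0, mul_zero]
        simp
      calc (0:ℝ) < ‖(u w)‖ := by
            exact norm_pos_iff.mpr huw
        _ ≤ ‖(u t0)‖ := hmax w (Finset.mem_univ w)
    -- abs of key equation at t0
    have habs : |ev t| * ((G.degree t0 : ℕ) : ℝ) * ‖(u t0)‖
        ≤ ((G.degree t0 : ℕ) : ℝ) * ‖(u t0)‖ := by
      have hL : ‖((-Complex.I * (ev t : ℂ)) * ((G.degree t0 : ℕ) : ℂ) * u t0)‖
          = |ev t| * ((G.degree t0 : ℕ) : ℝ) * ‖(u t0)‖ := by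
        rw [norm_mul, norm_mul, norm_mul]
        rw [norm_neg, Complex.norm_I, Complex.norm_real, Real.norm_eq_abs, Complex.norm_natCast, one_mul]
      have hsig : ∀ w, ‖((σ t0 w : ℂ))‖ = |σ t0 w| := fun w => by rw [Complex.norm_real, Real.norm_eq_abs]
      have hsigsum : ∑ w, |σ t0 w| = ((G.degree t0 : ℕ) : ℝ) := by
        have h4 : ∀ w, |σ t0 w| = if G.Adj t0 w then (1:ℝ) else 0 := by
          intro w
          by_cases hadj : G.Adj t0 w
          · rcases hσ.2.1 t0 w hadj with h5 | h5 <;> rw [h5] <;> simp [hadj]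
          · simp [hadj, hσ.2.2 t0 w hadj]
        rw [Finset.sum_congr rfl (fun w _ => h4 w), Finset.sum_boole]
        rw [show Finset.univ.filter (G.Adj t0) = G.neighborFinset t0 by
          rw [SimpleGraph.neighborFinset_eq_filter]]
        rw [SimpleGraph.card_neighborFinset_eq_degree]
      have hR : ‖(∑ w, (σ t0 w : ℂ) * u w)‖
          ≤ ((G.degree t0 : ℕ) : ℝ) * ‖(u t0)‖ := by
        calc ‖(∑ w, (σ t0 w : ℂ) * u w)‖
            ≤ ∑ w, ‖((σ t0 w : ℂ) * u w)‖ :=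
              norm_sum_le _ _
          _ = ∑ w, |σ t0 w| * ‖(u w)‖ := by
              apply Finset.sum_congr rfl
              intro w _
              rw [norm_mul, hsig w]
          _ ≤ ∑ w, |σ t0 w| * ‖(u t0)‖ := by
              apply Finset.sum_le_sum
              intro w _
              exact mul_le_mul_of_nonneg_left (hmax w (Finset.mem_univ w)) (abs_nonneg _)
          _ = ((G.degree t0 : ℕ) : ℝ) * ‖(u t0)‖ := by
              rw [← Finset.sum_mul, hsigsum]
      rw [← hL]
      rw [← hkey t0]
      exact hR
    have hdvpos : (0:ℝ) < ((G.degree t0 : ℕ) : ℝ) := by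
      have := hdeg t0
      positivity
    have hfac : (0:ℝ) < ((G.degree t0 : ℕ) : ℝ) * ‖(u t0)‖ := mul_pos hdvpos hu0
    nlinarith [habs, hfac]
  -- ASSEMBLY
  set n := Fintype.card V with hnn
  have hnR : (2:ℝ) ≤ (n:ℝ) := by exact_mod_cast hn
  set Λ : Multiset ℝ := Finset.univ.val.map ev with hΛ
  obtain ⟨T, k, hTk, hTpos⟩ := multiset_neg_pairing Λ hΛneg
  have habsT : T.map (fun x : ℝ => |x|) = T := by
    calc T.map (fun x : ℝ => |x|) = T.map id :=
        Multiset.map_congr rfl (fun x hx => abs_of_pos (hTpos x hx))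
      _ = T := Multiset.map_id T
  have hA : Λ.map (fun x : ℝ => |x|) = T + T + Multiset.replicate k 0 := by
    have hcomp : T.map ((fun x : ℝ => |x|) ∘ (fun x : ℝ => -x)) = T := by
      calc T.map ((fun x : ℝ => |x|) ∘ (fun x : ℝ => -x)) = T.map (fun x : ℝ => |x|) := by
            apply Multiset.map_congr rfl
            intro x _
            simp [abs_neg]
        _ = T := habsT
    rw [hTk, Multiset.map_add, Multiset.map_add, Multiset.map_map, Multiset.map_replicate,
      abs_zero, habsT, hcomp]
  have hEsum : energy M = T.sum + T.sum := by
    rw [henergy]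
    have e1 : ∑ v, |ev v| = (Λ.map (fun x : ℝ => |x|)).sum := by
      rw [hΛ, Multiset.map_map, Finset.sum_eq_multiset_sum]
      rfl
    rw [e1, hA, Multiset.sum_add, Multiset.sum_add, Multiset.sum_replicate, nsmul_eq_mul,
      mul_zero, add_zero]
  have hsqsum : (T.map (fun a : ℝ => a ^ 2)).sum + (T.map (fun a : ℝ => a ^ 2)).sum
      = ∑ v, ∑ w, (M v w) ^ 2 := by
    have e1 : ∑ v, (ev v) ^ 2 = ((Λ.map (fun x : ℝ => |x|)).map (fun a : ℝ => a ^ 2)).sum := by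
      rw [hΛ, Multiset.map_map, Multiset.map_map, Finset.sum_eq_multiset_sum]
      apply congrArg Multiset.sum
      apply Multiset.map_congr rfl
      intro v _
      show ev v ^ 2 = ((fun a : ℝ => a ^ 2) ∘ (fun x : ℝ => |x|)) (ev v)
      simp [sq_abs]
    rw [← hsumsq, e1, hA, Multiset.map_add, Multiset.map_add, Multiset.map_replicate]
    rw [Multiset.sum_add, Multiset.sum_add, Multiset.sum_replicate]
    norm_num
  have hprodA : T.prod * T.prod * (0:ℝ) ^ k = |M.det| := by
    rw [hdet]
    have e1 : ∏ v, |ev v| = (Λ.map (fun x : ℝ => |x|)).prod := by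
      rw [hΛ, Multiset.map_map, Finset.prod_eq_multiset_prod]
      rfl
    rw [e1, hA, Multiset.prod_add, Multiset.prod_add, Multiset.prod_replicate]
  have hcardT : 2 * Multiset.card T + k = n := by
    have e1 : Multiset.card (Λ.map (fun x : ℝ => |x|)) = n := by
      rw [Multiset.card_map, hΛ, Multiset.card_map]
      exact Finset.card_univ
    rw [hA] at e1
    simp only [Multiset.card_add, Multiset.card_replicate] at e1
    omega
  have hT1 : ∀ a ∈ T, a ≤ (1:ℝ) := by
    intro a ha
    have h1 : a ∈ Λ.map (fun x : ℝ => |x|) := by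
      rw [hA]
      exact Multiset.mem_add.mpr (Or.inl (Multiset.mem_add.mpr (Or.inl ha)))
    obtain ⟨x, hx, rfl⟩ := Multiset.mem_map.mp h1
    obtain ⟨v, _, rfl⟩ := Multiset.mem_map.mp hx
    exact hone v
  have hTsum0 : (0:ℝ) ≤ T.sum := Multiset.sum_nonneg (fun x hx => le_of_lt (hTpos x hx))
  have hF := F_bound G σ hσ hn hdeg
  rw [← hM, ← hnn] at hF
  have hn1R : (1:ℝ) ≤ (n:ℝ) - 1 := by linarith
  constructor
  · -- lower bound
    have hE0 : 0 ≤ energy M := by rw [hEsum]; linarith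
    have key : (2 * (n : ℝ)) / ((n:ℝ) - 1) +
        (n:ℝ) * ((n:ℝ) - 2) * |M.det| ^ ((2:ℝ) / (n:ℝ)) ≤ (energy M) ^ 2 := by
      have hE2 : (energy M) ^ 2 = 4 * T.sum ^ 2 := by rw [hEsum]; ring
      have h2n : (2 * (n:ℝ)) / ((n:ℝ) - 1) = 2 * ((n:ℝ) / ((n:ℝ) - 1)) := by ring
      by_cases hk : k = 0
      · subst hk
        have hc1 : 1 ≤ Multiset.card T := by omega
        have hq0 : (0:ℝ) < T.prod := Multiset.prod_pos hTpos
        have hpq : |M.det| = T.prod ^ (2:ℕ) := by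
          rw [← hprodA, pow_zero, mul_one, ← pow_two]
        have hnm : (n:ℝ) = 2 * (Multiset.card T : ℝ) := by
          have : n = 2 * Multiset.card T := by omega
          exact_mod_cast this
        have hrpow : |M.det| ^ ((2:ℝ) / (n:ℝ))
            = T.prod ^ ((2:ℝ) / (Multiset.card T : ℝ)) := by
          rw [hpq, ← Real.rpow_natCast T.prod 2, ← Real.rpow_mul hq0.le]
          congr 1
          have hcne : (Multiset.card T : ℝ) ≠ 0 := by
            have : (1:ℝ) ≤ (Multiset.card T : ℝ) := by exact_mod_cast hc1
            linarith
          rw [hnm]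
          push_cast
          field_simp
        have hterm : (n:ℝ) * ((n:ℝ) - 2) * |M.det| ^ ((2:ℝ) / (n:ℝ))
            = 4 * ((Multiset.card T : ℝ) * ((Multiset.card T : ℝ) - 1) *
              T.prod ^ ((2:ℝ) / (Multiset.card T : ℝ))) := by
          rw [hrpow, hnm]
          ring
        have hamgm := multiset_amgm T hTpos
        rw [hterm, hE2, h2n]
        linarith [hF, hsqsum, hamgm]
      · have hdet0 : |M.det| = 0 := by
          rw [← hprodA, zero_pow hk, mul_zero]
        have hne : (2:ℝ) / (n:ℝ) ≠ 0 := by positivity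
        rw [hdet0, Real.zero_rpow hne, mul_zero, add_zero, hE2, h2n]
        have hsq2 := multiset_sq_sum_le (T := T) (fun a ha => le_of_lt (hTpos a ha))
        linarith [hF, hsqsum, hsq2]
    calc Real.sqrt ((2 * (n : ℝ)) / ((n:ℝ) - 1) +
          (n:ℝ) * ((n:ℝ) - 2) * |M.det| ^ ((2:ℝ) / (n:ℝ)))
        ≤ Real.sqrt ((energy M) ^ 2) := Real.sqrt_le_sqrt key
      _ = energy M := Real.sqrt_sq hE0
  · -- upper bound
    have h1 : T.sum ≤ (Multiset.card T : ℝ) := by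
      have := Multiset.sum_le_card_nsmul T 1 hT1
      rwa [nsmul_eq_mul, mul_one] at this
    have h2 : Multiset.card T ≤ n / 2 := by omega
    have h3 : (Multiset.card T : ℝ) ≤ ((n / 2 : ℕ) : ℝ) := by exact_mod_cast h2
    rw [hEsum]
    linarith
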